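/- With the norm ‖(x,y)‖_f = inf { ‖x−w‖ + ‖y + f w‖ + ε‖w‖ : w ∈ X } on X × Y, the canonical embedding i : X → X × Y, i(x) = (x, 0), is isometric: ‖(x,0)‖_f = ‖x‖ for all x ∈ X. -/
import Mathlib


/-- the canonical embedding i : X → X × Y, x ↦ (x,0), is isometric
for the norm ‖·‖_f. -/
theorem stmt_1 {X Y : Type*} [NormedAddCommGroup X] [NormedSpace ℝ X]
    [NormedAddCommGroup Y] [NormedSpace ℝ Y]
    (ε : ℝ) (hε0 : 0 < ε) (hε1 : ε < 1)
    (f : X →ₗ[ℝ] Y) (hf1 : ∀ x, ‖f x‖ ≤ ‖x‖)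
    (hf2 : ∀ x, (1 - ε) * ‖x‖ ≤ ‖f x‖)
    (N : X × Y → ℝ)
    (hN : N = fun p => sInf {r : ℝ | ∃ w : X, r = ‖p.1 - w‖ + ‖p.2 + f w‖ + ε * ‖w‖}) :
    ∀ x : X, N (x, 0) = ‖x‖ := by
  subst hN
  intro x
  have hlb : ∀ r ∈ {r : ℝ | ∃ w : X, r = ‖x - w‖ + ‖(0 : Y) + f w‖ + ε * ‖w‖}, ‖x‖ ≤ r := by
    rintro r ⟨w, rfl⟩
    have h1 : (1 - ε) * ‖w‖ ≤ ‖f w‖ := hf2 w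
    have h2 : ‖x‖ ≤ ‖x - w‖ + ‖w‖ := by simpa using norm_add_le (x - w) w
    simp only [zero_add]
    nlinarith [norm_nonneg w]
  apply le_antisymm
  · have : (‖x - 0‖ + ‖(0 : Y) + f 0‖ + ε * ‖(0 : X)‖) ∈
        {r : ℝ | ∃ w : X, r = ‖x - w‖ + ‖(0 : Y) + f w‖ + ε * ‖w‖} := ⟨0, rfl⟩
    have := csInf_le ⟨‖x‖, hlb⟩ this
    simpa using this
  · exact le_csInf ⟨_, ⟨0, rfl⟩⟩ hlb
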